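/- Suppose (λ, l, e*, w*) ∈ ℝ × ℝ^k × E* × W* satisfies λμ + Σ_{j=1}^k l_j·γ_j + ⟨e*, e⟩ + ⟨w*, w⟩ ≥ 0 for every (μ, γ, e, w) ∈ S, where S := {(μ, γ, e, w) : there exists z ∈ Z with a(z) + α < μ, b_j(z) + β_j < γ_j for all j, T_E(z) + e₀ = e, and T_W(z) + w₀ − w ∈ cone(int K − g₀)}. Then: λ ≥ 0; l_j ≥ 0 for all j; λ·a + Σ_j l_j·b_j + e*∘T_E + w*∘T_W = 0 in Z*; ⟨w*, w'⟩ ≤ 0 for all w' ∈ cone(K − g₀) (i.e. w* ∈ N(K, g₀)); and λα + Σ_j l_j·β_j + ⟨e*, e₀⟩ + ⟨w*, w₀⟩ ≥ 0. -/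

import Mathlib

/-- The cone generated by `S - x`. -/
def coneOf {W : Type*} [AddCommGroup W] [Module ℝ W] (S : Set W) (x : W) : Set W :=
  {w | ∃ t : ℝ, 0 < t ∧ ∃ s ∈ S, w = t • (s - x)}

/-- The auxiliary set `S` appearing in the separation argument. -/
def auxSet {Z E W : Type*}
    [NormedAddCommGroup Z] [NormedSpace ℝ Z]
    [NormedAddCommGroup E] [NormedSpace ℝ E]
    [NormedAddCommGroup W] [NormedSpace ℝ W]
    (k : ℕ) (a : Z →L[ℝ] ℝ) (b : Fin k → Z →L[ℝ] ℝ)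
    (TE : Z →L[ℝ] E) (TW : Z →L[ℝ] W)
    (α : ℝ) (β : Fin k → ℝ) (e₀ : E) (w₀ : W)
    (K : Set W) (g₀ : W) : Set (ℝ × (Fin k → ℝ) × E × W) :=
  {p | ∃ z : Z,
    a z + α < p.1 ∧
    (∀ j, b j z + β j < p.2.1 j) ∧
    TE z + e₀ = p.2.2.1 ∧
    TW z + w₀ - p.2.2.2 ∈ coneOf (interior K) g₀}

/-- If `0 ≤ A + ε * c` for all small positive `ε`, then `0 ≤ A`. -/
lemma aux_small (A c : ℝ) (h : ∀ ε : ℝ, 0 < ε → ε ≤ 1 → 0 ≤ A + ε * c) : 0 ≤ A := by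
  by_contra hA
  push_neg at hA
  set ε : ℝ := min 1 ((-A) / (2 * (|c| + 1))) with hε
  have hc1 : (0:ℝ) < |c| + 1 := by positivity
  have hεpos : 0 < ε := lt_min one_pos (div_pos (by linarith) (by positivity))
  have hε1 : ε ≤ 1 := min_le_left _ _
  have h2 : ε ≤ (-A) / (2 * (|c| + 1)) := min_le_right _ _
  have h3 : ε * c ≤ ε * |c| :=
    mul_le_mul_of_nonneg_left (le_abs_self c) hεpos.le
  have h4 : ε * |c| ≤ (-A) / (2 * (|c| + 1)) * |c| :=
    mul_le_mul_of_nonneg_right h2 (abs_nonneg c)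
  have h5 : (-A) / (2 * (|c| + 1)) * |c| ≤ (-A) / 2 := by
    rw [div_mul_eq_mul_div, div_le_div_iff₀ (by positivity) two_pos]
    nlinarith [abs_nonneg c]
  have := h ε hεpos hε1
  linarith

/-- If `0 ≤ c * M + D` for all positive `M`, then `0 ≤ c`. -/
lemma aux_large (c D : ℝ) (h : ∀ M : ℝ, 0 < M → 0 ≤ c * M + D) : 0 ≤ c := by
  by_contra hc
  push_neg at hc
  have hM : 0 < (|D| + 1) / (-c) := div_pos (by positivity) (by linarith)
  have := h _ hM
  have hc0 : c ≠ 0 := ne_of_lt hc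
  have hcM : c * ((|D| + 1) / (-c)) = -(|D| + 1) := by
    rw [mul_div_assoc', mul_comm, mul_div_assoc, div_neg, div_self hc0]
    ring
  rw [hcM] at this
  have := le_abs_self D
  linarith

/-- If `0 ≤ r * A + D` for all reals `r`, then `A = 0`. -/
lemma aux_all (A D : ℝ) (h : ∀ r : ℝ, 0 ≤ r * A + D) : A = 0 := by
  by_contra hA
  have := h (-(|D| + 1) / A)
  have hr : -(|D| + 1) / A * A = -(|D| + 1) := by
    field_simp
  rw [hr] at this
  have := le_abs_self D
  linarith

theorem separation_consequences
    {Z E W : Type*}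
    [NormedAddCommGroup Z] [NormedSpace ℝ Z] [CompleteSpace Z]
    [NormedAddCommGroup E] [NormedSpace ℝ E] [CompleteSpace E]
    [NormedAddCommGroup W] [NormedSpace ℝ W] [CompleteSpace W]
    (k : ℕ) (a : Z →L[ℝ] ℝ) (b : Fin k → Z →L[ℝ] ℝ)
    (TE : Z →L[ℝ] E) (TW : Z →L[ℝ] W)
    (α : ℝ) (β : Fin k → ℝ) (e₀ : E) (w₀ : W)
    (K : Set W) (hKconv : Convex ℝ K) (hKint : (interior K).Nonempty)
    (g₀ : W) (hg₀ : g₀ ∈ K)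
    (lam : ℝ) (l : Fin k → ℝ) (estar : E →L[ℝ] ℝ) (wstar : W →L[ℝ] ℝ)
    (hsep : ∀ p ∈ auxSet k a b TE TW α β e₀ w₀ K g₀,
      0 ≤ lam * p.1 + (∑ j, l j * p.2.1 j) + estar p.2.2.1 + wstar p.2.2.2) :
    0 ≤ lam ∧
    (∀ j, 0 ≤ l j) ∧
    (∀ z : Z, lam * a z + (∑ j, l j * b j z) + estar (TE z) + wstar (TW z) = 0) ∧
    (∀ w' ∈ coneOf K g₀, wstar w' ≤ 0) ∧
    0 ≤ lam * α + (∑ j, l j * β j) + estar e₀ + wstar w₀ := by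
  obtain ⟨s₀, hs₀⟩ := hKint
  -- master inequality
  have master : ∀ (z : Z) (ε₀ : ℝ) (ε : Fin k → ℝ) (t : ℝ) (s : W),
      0 < ε₀ → (∀ j, 0 < ε j) → 0 < t → s ∈ interior K →
      0 ≤ (lam * a z + (∑ j, l j * b j z) + estar (TE z) + wstar (TW z))
        + (lam * α + (∑ j, l j * β j) + estar e₀ + wstar w₀)
        + lam * ε₀ + (∑ j, l j * ε j) - t * wstar (s - g₀) := by
    intro z ε₀ ε t s hε₀ hε ht hs
    have hmem : (a z + α + ε₀, fun j => b j z + β j + ε j,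
        TE z + e₀, TW z + w₀ - t • (s - g₀)) ∈ auxSet k a b TE TW α β e₀ w₀ K g₀ := by
      refine ⟨z, by dsimp only; linarith, fun j => by have := hε j; dsimp only; linarith,
        rfl, ?_⟩
      exact ⟨t, ht, s, hs, by rw [sub_sub_cancel]⟩
    have hp := hsep _ hmem
    simp only [map_add, map_sub, map_smul, smul_eq_mul, mul_add,
      Finset.sum_add_distrib] at hp
    simp only [map_sub]
    linarith
  -- 0 ≤ lam
  have hlam : 0 ≤ lam := by
    apply aux_large lam ((lam * α + (∑ j, l j * β j) + estar e₀ + wstar w₀)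
      + (∑ j, l j * (1:ℝ)) - 1 * wstar (s₀ - g₀))
    intro M hM
    have h := master 0 M (fun _ => 1) 1 s₀ hM (fun _ => one_pos) one_pos hs₀
    simp only [map_zero, mul_zero, zero_add, Finset.sum_const_zero] at h
    linarith
  -- 0 ≤ l j
  have hl : ∀ j, 0 ≤ l j := by
    intro j
    apply aux_large (l j) ((lam * α + (∑ j, l j * β j) + estar e₀ + wstar w₀)
      + lam * 1 + (∑ i ∈ Finset.univ.erase j, l i * (1:ℝ)) - 1 * wstar (s₀ - g₀))
    intro M hM
    have h := master 0 1 (fun i => if i = j then M else 1) 1 s₀ one_pos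
      (fun i => by split <;> [exact hM; exact one_pos]) one_pos hs₀
    simp only [map_zero, mul_zero, zero_add, Finset.sum_const_zero] at h
    have hsum : (∑ i, l i * (if i = j then M else (1:ℝ)))
        = l j * M + ∑ i ∈ Finset.univ.erase j, l i * 1 := by
      rw [← Finset.add_sum_erase Finset.univ
        (fun i => l i * (if i = j then M else (1:ℝ))) (Finset.mem_univ j)]
      simp only [if_pos rfl]
      congr 1
      refine Finset.sum_congr rfl fun i hi => ?_
      rw [if_neg (Finset.ne_of_mem_erase hi)]
    rw [hsum] at h
    linarith
  -- key : ∀ z, 0 ≤ G z + D₁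
  have key : ∀ z : Z, 0 ≤ (lam * a z + (∑ j, l j * b j z) + estar (TE z) + wstar (TW z))
      + (lam * α + (∑ j, l j * β j) + estar e₀ + wstar w₀) := by
    intro z
    apply aux_small _ (lam + (∑ j, l j) - wstar (s₀ - g₀))
    intro ε hε _
    have h := master z ε (fun _ => ε) ε s₀ hε (fun _ => hε) hε hs₀
    have hsum : (∑ j, l j * ε) = (∑ j, l j) * ε := by rw [Finset.sum_mul]
    rw [hsum] at h
    nlinarith
  -- G z = 0
  have hG : ∀ z : Z, lam * a z + (∑ j, l j * b j z) + estar (TE z) + wstar (TW z) = 0 := by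
    intro z
    apply aux_all _ (lam * α + (∑ j, l j * β j) + estar e₀ + wstar w₀)
    intro r
    have h := key (r • z)
    simp only [map_smul, smul_eq_mul] at h
    have hsum : (∑ j, l j * (r * b j z)) = r * ∑ j, l j * b j z := by
      rw [Finset.mul_sum]
      exact Finset.sum_congr rfl fun j _ => by ring
    rw [hsum] at h
    nlinarith
  -- wstar nonpositive on coneOf (interior K) g₀
  have hint : ∀ (s : W), s ∈ interior K → wstar (s - g₀) ≤ 0 := by
    intro s hs
    have h0 : 0 ≤ -wstar (s - g₀) := by
      apply aux_large _ ((lam * α + (∑ j, l j * β j) + estar e₀ + wstar w₀)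
        + lam * 1 + (∑ j, l j * (1:ℝ)))
      intro M hM
      have h := master 0 1 (fun _ => 1) M s one_pos (fun _ => one_pos) hM hs
      simp only [map_zero, mul_zero, zero_add, Finset.sum_const_zero] at h
      nlinarith
    linarith
  -- wstar nonpositive on coneOf K g₀
  have hK : ∀ w' ∈ coneOf K g₀, wstar w' ≤ 0 := by
    rintro w' ⟨t, ht, s, hs, rfl⟩
    have hcomb : ∀ θ : ℝ, 0 < θ → θ ≤ 1 →
        θ • s₀ + (1 - θ) • s ∈ interior K := fun θ hθ hθ1 =>
      Convex.combo_interior_closure_mem_interior hKconv hs₀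
        (subset_closure hs) hθ (by linarith) (by ring)
    have h0 : 0 ≤ -wstar (t • (s - g₀)) := by
      apply aux_small _ (-(t * (wstar s₀ - wstar s)))
      intro θ hθ hθ1
      have h := hint _ (hcomb θ hθ hθ1)
      simp only [map_sub, map_add, map_smul, smul_eq_mul] at h ⊢
      nlinarith
    linarith
  refine ⟨hlam, hl, hG, hK, ?_⟩
  have h := key 0
  simp only [map_zero, mul_zero, zero_add, Finset.sum_const_zero] at h
  linarith
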